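/- With z_r = E_α^{−r}(z) as above, for all j ≥ 1 the quantity (1 − (1 + 2^α z_j^α)^{−α})/z_j^α lies between α(1−α)2^{α−1} and α·2^α. -/

import Mathlib

/-- Left branch of the LSV (Pomeau–Manneville type) map. -/
noncomputable def Ea (α x : ℝ) : ℝ := x * (1 + 2 ^ α * x ^ α)

/-- Upper Bernoulli-type bound: `1 - α t ≤ (1+t)^(-α)` for `t ≥ 0`, `0 ≤ α ≤ 1`. -/
lemma aux_upper {α t : ℝ} (hα0 : 0 ≤ α) (hα1 : α ≤ 1) (ht : 0 ≤ t) :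
    1 - α * t ≤ (1 + t) ^ (-α) := by
  have h1t : (0:ℝ) < 1 + t := by linarith
  have hB : (1 + t) ^ α ≤ 1 + α * t :=
    rpow_one_add_le_one_add_mul_self (by linarith) hα0 hα1
  have hpos : (0:ℝ) < (1 + t) ^ α := Real.rpow_pos_of_pos h1t α
  rw [Real.rpow_neg h1t.le]
  have hinv : ((1 + t) ^ α) * ((1 + t) ^ α)⁻¹ = 1 := mul_inv_cancel₀ hpos.ne'
  have hipos : (0:ℝ) < ((1 + t) ^ α)⁻¹ := inv_pos.mpr hpos
  nlinarith [mul_nonneg (mul_nonneg hα0 ht) (mul_nonneg hα0 ht)]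

/-- Lower bound: `α t / (1+t) ≤ 1 - (1+t)^(-α)` for `t ≥ 0`, `0 ≤ α ≤ 1`. -/
lemma aux_lower {α t : ℝ} (hα0 : 0 ≤ α) (hα1 : α ≤ 1) (ht : 0 ≤ t) :
    (1 + t) ^ (-α) ≤ 1 - α * t / (1 + t) := by
  have h1t : (0:ℝ) < 1 + t := by linarith
  have hs : -1 ≤ -t / (1 + t) := by
    rw [neg_div, neg_le_neg_iff, div_le_one h1t]; linarith
  have hB : (1 + -t / (1 + t)) ^ α ≤ 1 + α * (-t / (1 + t)) :=
    rpow_one_add_le_one_add_mul_self hs hα0 hα1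
  have hkey : 1 + -t / (1 + t) = (1 + t)⁻¹ := by
    field_simp
    ring
  rw [hkey] at hB
  rw [Real.inv_rpow h1t.le, ← Real.rpow_neg h1t.le] at hB
  calc (1 + t) ^ (-α) ≤ 1 + α * (-t / (1 + t)) := hB
    _ = 1 - α * t / (1 + t) := by ring

theorem stmt5 (α z : ℝ) (hα : α ∈ Set.Ioo (0:ℝ) 1) (hz : z ∈ Set.Ioc (0:ℝ) 1)
    (Z : ℕ → ℝ) (hZ0 : Z 0 = z)
    (hrec : ∀ r : ℕ, Z r = Z (r + 1) * (1 + 2 ^ α * Z (r + 1) ^ α))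
    (hmem : ∀ r : ℕ, 1 ≤ r → Z r ∈ Set.Ioc (0:ℝ) (1/2)) :
    ∀ j : ℕ, 1 ≤ j →
      α * (1 - α) * 2 ^ (α - 1) ≤ (1 - (1 + 2 ^ α * Z j ^ α) ^ (-α)) / Z j ^ α ∧
        (1 - (1 + 2 ^ α * Z j ^ α) ^ (-α)) / Z j ^ α ≤ α * 2 ^ α := by
  obtain ⟨hα0, hα1⟩ := hα
  intro j hj
  obtain ⟨hu0, hu2⟩ := hmem j hj
  set u := Z j with hu
  have ha : (0:ℝ) < u ^ α := Real.rpow_pos_of_pos hu0 α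
  have h2 : (0:ℝ) < (2:ℝ) ^ α := Real.rpow_pos_of_pos two_pos α
  set t : ℝ := 2 ^ α * u ^ α with htdef
  have ht0 : 0 < t := mul_pos h2 ha
  have ht1 : t ≤ 1 := by
    have h1 : u ^ α ≤ (1/2 : ℝ) ^ α := Real.rpow_le_rpow hu0.le hu2 hα0.le
    have h2' : (2:ℝ) ^ α * (1/2 : ℝ) ^ α = 1 := by
      rw [← Real.mul_rpow (by norm_num) (by norm_num)]
      norm_num
    calc t ≤ 2 ^ α * (1/2:ℝ) ^ α := by
          exact mul_le_mul_of_nonneg_left h1 h2.le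
      _ = 1 := h2'
  have h1t : (0:ℝ) < 1 + t := by linarith
  constructor
  · -- lower bound
    rw [le_div_iff₀ ha]
    have hlow : (1 + t) ^ (-α) ≤ 1 - α * t / (1 + t) := aux_lower hα0.le hα1.le ht0.le
    have hfrac : α * (1 - α) * t / 2 ≤ α * t / (1 + t) := by
      rw [div_le_div_iff₀ (by norm_num) h1t]
      nlinarith [mul_nonneg hα0.le ht0.le]
    have h2α : (2:ℝ) ^ (α - 1) = 2 ^ α / 2 := by
      rw [Real.rpow_sub two_pos, Real.rpow_one]
    have : α * (1 - α) * 2 ^ (α - 1) * u ^ α = α * (1 - α) * t / 2 := by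
      rw [h2α, htdef]; ring
    rw [this]
    linarith
  · -- upper bound
    rw [div_le_iff₀ ha]
    have hup : 1 - α * t ≤ (1 + t) ^ (-α) := aux_upper hα0.le hα1.le ht0.le
    have : α * 2 ^ α * u ^ α = α * t := by rw [htdef]; ring
    rw [this]
    linarith
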